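/- Let 1 ≤ k₋ < k₊ and n ≥ 1 be integers. If there exists a positive integer d dividing (k₊+k₋)n+1 such that no prime p ≤ k₊ divides d, but (k₊+k₋)·d does not divide (k₊+k₋)n+1−d, then there is no splitting ℤ_{(k₊+k₋)n+1} = (M,S) with multiplier set M = [-k₋,k₊]* = {m ∈ ℤ : -k₋ ≤ m ≤ k₊, m ≠ 0} and |S| = n. (Equivalently, the (k₊,k₋,n)-quasi-cross does not lattice tile ℝⁿ.) -/

import Mathlib

/-- `(M, S)` is a splitting of `ℤ_q`: `M ⊆ ℤ \ {0}`, and the products `m·s`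
(for `m ∈ M`, `s ∈ S`) are pairwise distinct and cover exactly the nonzero
elements of `ZMod q`. -/
def IsSplitting (q : ℕ) (M : Finset ℤ) (S : Finset (ZMod q)) : Prop :=
  (0 : ℤ) ∉ M ∧
  Set.InjOn (fun p : ℤ × ZMod q => (p.1 : ZMod q) * p.2) ↑(M ×ˢ S) ∧
  (fun p : ℤ × ZMod q => (p.1 : ZMod q) * p.2) '' ↑(M ×ˢ S) = {a : ZMod q | a ≠ 0}

theorem stmt_15 (kp km n : ℕ) (hkm : 1 ≤ km) (hk : km < kp) (hn : 1 ≤ n)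
    (d : ℕ) (hd : 0 < d) (hdvd : d ∣ (kp + km) * n + 1)
    (hcop : ∀ p : ℕ, Nat.Prime p → p ≤ kp → ¬ p ∣ d)
    (hndvd : ¬ (kp + km) * d ∣ (kp + km) * n + 1 - d) :
    ¬ ∃ S : Finset (ZMod ((kp + km) * n + 1)),
        IsSplitting ((kp + km) * n + 1)
          ((Finset.Icc (-(km : ℤ)) (kp : ℤ)).erase 0) S ∧ S.card = n := by
  set q : ℕ := (kp + km) * n + 1 with hq
  rintro ⟨S, ⟨hM0, hinj, himg⟩, hScard⟩
  haveI : NeZero q := ⟨Nat.succ_ne_zero _⟩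
  haveI : NeZero d := ⟨hd.ne'⟩
  set M : Finset ℤ := (Finset.Icc (-(km : ℤ)) (kp : ℤ)).erase 0 with hM
  set φ : ZMod q →+* ZMod d := ZMod.castHom hdvd (ZMod d) with hφ
  -- every m in M is a unit mod d
  have hunit : ∀ m ∈ M, IsUnit ((m : ZMod d)) := by
    intro m hm
    rw [hM, Finset.mem_erase, Finset.mem_Icc] at hm
    obtain ⟨hm0, hlow, hhigh⟩ := hm
    have habs : m.natAbs ≤ kp := by omega
    have habs0 : 1 ≤ m.natAbs := by omega
    have hco : Nat.Coprime m.natAbs d := by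
      by_contra hnc
      obtain ⟨p, hp, hpm, hpd⟩ := Nat.Prime.not_coprime_iff_dvd.mp hnc
      exact hcop p hp (le_trans (Nat.le_of_dvd (by omega) hpm) habs) hpd
    have hic : IsCoprime (m : ℤ) (d : ℤ) := by
      rw [Int.isCoprime_iff_gcd_eq_one]
      simpa [Int.gcd] using hco
    obtain ⟨u, v, huv⟩ := hic
    have h1 : (u : ZMod d) * (m : ZMod d) = 1 := by
      have := congrArg (fun z : ℤ => ((z : ZMod d))) huv
      push_cast at this
      simpa [ZMod.natCast_self] using this
    exact IsUnit.of_mul_eq_one _ (mul_comm (u : ZMod d) _ ▸ h1)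
  set T : Finset (ZMod q) := S.filter (fun s => φ s = 0) with hT
  -- image of M ×ˢ T is exactly the nonzero elements killed by φ
  have himg2 : Finset.image (fun p : ℤ × ZMod q => (p.1 : ZMod q) * p.2) (M ×ˢ T)
      = Finset.univ.filter (fun a : ZMod q => a ≠ 0 ∧ φ a = 0) := by
    ext a
    simp only [Finset.mem_image, Finset.mem_filter, Finset.mem_univ, true_and,
      Finset.mem_product, hT, Finset.mem_filter]
    constructor
    · rintro ⟨⟨m, s⟩, ⟨hmM, hsS, hs0⟩, rfl⟩
      constructor
      · have : ((m : ZMod q) * s) ∈ (fun p : ℤ × ZMod q => (p.1 : ZMod q) * p.2) ''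
            ↑(M ×ˢ S) := ⟨(m, s), by simpa using ⟨hmM, hsS⟩, rfl⟩
        rw [himg] at this
        exact this
      · rw [map_mul]
        simp [hs0]
    · rintro ⟨ha0, haφ⟩
      have : a ∈ (fun p : ℤ × ZMod q => (p.1 : ZMod q) * p.2) '' ↑(M ×ˢ S) := by
        rw [himg]; exact ha0
      obtain ⟨⟨m, s⟩, hms, rfl⟩ := this
      simp only [Finset.coe_product, Set.mem_prod, Finset.mem_coe] at hms
      refine ⟨(m, s), ⟨hms.1, hms.2, ?_⟩, rfl⟩
      have h2 : (m : ZMod d) * φ s = 0 := by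
        rw [← map_intCast φ m, ← map_mul]; exact haφ
      have := (hunit m hms.1).mul_right_eq_zero.mp h2
      exact this
  -- cardinalities
  have hTsub : (M ×ˢ T : Finset (ℤ × ZMod q)) ⊆ M ×ˢ S :=
    Finset.product_subset_product_right (Finset.filter_subset _ _)
  have hcard1 : (Finset.image (fun p : ℤ × ZMod q => (p.1 : ZMod q) * p.2) (M ×ˢ T)).card
      = M.card * T.card := by
    rw [Finset.card_image_of_injOn (hinj.mono (by exact_mod_cast hTsub)),
      Finset.card_product]
  -- count the RHS: nonzero multiples of d among values
  have hcard2 : (Finset.univ.filter (fun a : ZMod q => a ≠ 0 ∧ φ a = 0)).card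
      = (q - 1) / d := by
    have := Nat.card_multiples' (q - 1) d
    rw [Nat.succ_eq_add_one, Nat.sub_add_cancel (by omega : 1 ≤ q)] at this
    rw [← this]
    apply Finset.card_bij (fun a _ => a.val)
    · intro a ha
      simp only [Finset.mem_filter, Finset.mem_univ, true_and] at ha ⊢
      refine ⟨Finset.mem_range.mpr a.val_lt, ?_, ?_⟩
      · rw [Ne, ZMod.val_eq_zero]; exact ha.1
      · have : φ a = ((a.val : ℕ) : ZMod d) := by
          rw [hφ, ZMod.castHom_apply, ← ZMod.natCast_val]
        rw [this] at ha
        exact (ZMod.natCast_eq_zero_iff _ _).mp ha.2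
    · intro a _ b _ hab
      exact ZMod.val_injective q hab
    · intro k hk
      simp only [Finset.mem_filter, Finset.mem_range] at hk
      refine ⟨(k : ZMod q), ?_, ?_⟩
      · simp only [Finset.mem_filter, Finset.mem_univ, true_and]
        constructor
        · rw [Ne, ← ZMod.val_eq_zero, ZMod.val_natCast_of_lt hk.1]
          exact hk.2.1
        · rw [hφ, ZMod.castHom_apply, ← ZMod.natCast_val, ZMod.val_natCast_of_lt hk.1]
          exact (ZMod.natCast_eq_zero_iff _ _).mpr hk.2.2
      · exact ZMod.val_natCast_of_lt hk.1
  -- card of M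
  have hMcard : M.card = kp + km := by
    rw [hM, Finset.card_erase_of_mem (Finset.mem_Icc.mpr (by omega)),
      Int.card_Icc]
    omega
  have hkey : (kp + km) * T.card = (q - 1) / d := by
    rw [← hMcard, ← hcard1, himg2, hcard2]
  -- conclude divisibility, contradiction
  obtain ⟨e, he⟩ := hdvd
  have he1 : 1 ≤ e := by nlinarith [hd]
  obtain ⟨t, rfl⟩ : ∃ t, e = t + 1 := ⟨e - 1, by omega⟩
  have hqd : q = d * t + d := by rw [hq] at he ⊢; rw [he]; ring
  have hdiv : (q - 1) / d = t := by
    have h1 : q - 1 = d * t + (d - 1) := by omega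
    rw [h1, Nat.mul_add_div hd, Nat.div_eq_of_lt (by omega)]
    omega
  apply hndvd
  refine ⟨T.card, ?_⟩
  have h2 : (kp + km) * d * T.card = d * ((kp + km) * T.card) := by ring
  rw [← hq] at *
  rw [h2, hkey, hdiv]
  omega
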